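/- arXiv:2006.02304 — 5 statements merged into one kernel-verified Lean document; each statement's English description precedes it below -/
import Mathlib

section
/- For any fair infinite path π of an asynchronous Boolean network, the set I(π) of states that occur infinitely often in π is an attractor of the network. -/
/-- Asynchronous transition relation of a Boolean network with update
functions `f`: `s → s'` iff `s' = Function.update s i (f i s)` for some `i`. -/
def BNStep {n : ℕ} (f : Fin n → (Fin n → Bool) → Bool)
    (s s' : Fin n → Bool) : Prop :=
  ∃ i : Fin n, s' = Function.update s i (f i s)

/-- The set of states reachable from `s` (reflexive-transitive closure). -/
def BNReach {n : ℕ} (f : Fin n → (Fin n → Bool) → Bool)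
    (s : Fin n → Bool) : Set (Fin n → Bool) :=
  {s' | Relation.ReflTransGen (BNStep f) s s'}

/-- An attractor: a nonempty set `A` with `reach s = A` for every `s ∈ A`. -/
def IsAttractor {n : ℕ} (f : Fin n → (Fin n → Bool) → Bool)
    (A : Set (Fin n → Bool)) : Prop :=
  A.Nonempty ∧ ∀ s ∈ A, BNReach f s = A

/-- Weak basin of `A`. -/
def basW {n : ℕ} (f : Fin n → (Fin n → Bool) → Bool)
    (A : Set (Fin n → Bool)) : Set (Fin n → Bool) :=
  {s | (BNReach f s ∩ A).Nonempty}

/-- Strong basin of `A`. -/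
def basS {n : ℕ} (f : Fin n → (Fin n → Bool) → Bool)
    (A : Set (Fin n → Bool)) : Set (Fin n → Bool) :=
  {s | (BNReach f s ∩ A).Nonempty ∧
    ∀ A' : Set (Fin n → Bool), IsAttractor f A' → A' ≠ A → BNReach f s ∩ A' = ∅}

/-- An infinite path of the asynchronous dynamics. -/
def IsPath {n : ℕ} (f : Fin n → (Fin n → Bool) → Bool)
    (π : ℕ → Fin n → Bool) : Prop :=
  ∀ k : ℕ, BNStep f (π k) (π (k + 1))

/-- `x` occurs infinitely often in `π`. -/
def InfOften {n : ℕ} (π : ℕ → Fin n → Bool) (x : Fin n → Bool) : Prop :=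
  ∀ i : ℕ, ∃ j ≥ i, π j = x

/-- Fairness: every successor of every infinitely-often state occurs
infinitely often. -/
def Fair {n : ℕ} (f : Fin n → (Fin n → Bool) → Bool)
    (π : ℕ → Fin n → Bool) : Prop :=
  ∀ x : Fin n → Bool, InfOften π x →
    ∀ x' : Fin n → Bool, BNStep f x x' → InfOften π x'

/-- Applying a control `C = (O, I)` to a state. -/
def applyC {n : ℕ} (O I : Finset (Fin n)) (s : Fin n → Bool) : Fin n → Bool :=
  fun i => if i ∈ O then false else if i ∈ I then true else s i

/-- The restricted state space `S|C`. -/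
def restrC {n : ℕ} (O I : Finset (Fin n)) : Set (Fin n → Bool) :=
  {s | (∀ i ∈ O, s i = false) ∧ (∀ i ∈ I, s i = true)}

/-- Update functions of the controlled network `G|C`. -/
def ctrlF {n : ℕ} (f : Fin n → (Fin n → Bool) → Bool) (O I : Finset (Fin n)) :
    Fin n → (Fin n → Bool) → Bool :=
  fun i s => if i ∈ O then false else if i ∈ I then true else f i s

/-- `C` is a temporary target control for `At`: for every source state `s`,
every fair infinite path of the controlled network `G|C` starting from `C(s)`
eventually reaches the strong basin of `At` in the original network. -/
def IsTTC {n : ℕ} (f : Fin n → (Fin n → Bool) → Bool) (O I : Finset (Fin n))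
    (At : Set (Fin n → Bool)) : Prop :=
  ∀ s : Fin n → Bool, ∀ π : ℕ → Fin n → Bool,
    π 0 = applyC O I s → IsPath (ctrlF f O I) π → Fair (ctrlF f O I) π →
    ∃ k : ℕ, π k ∈ basS f At


lemma path_reach_aux {n : ℕ} (f : Fin n → (Fin n → Bool) → Bool)
    (π : ℕ → Fin n → Bool) (h : IsPath f π) :
    ∀ a b, a ≤ b → Relation.ReflTransGen (BNStep f) (π a) (π b) := by
  intro a b hab
  induction b, hab using Nat.le_induction with
  | base => exact Relation.ReflTransGen.refl
  | succ b hb ih => exact ih.tail (h b)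

/-- the set of states occurring infinitely often in a fair
infinite path is an attractor. -/
theorem infOften_set_isAttractor {n : ℕ}
    (f : Fin n → (Fin n → Bool) → Bool) (π : ℕ → Fin n → Bool)
    (hpath : IsPath f π) (hfair : Fair f π) :
    IsAttractor f {x : Fin n → Bool | InfOften π x} := by
  constructor
  · obtain ⟨x, hx⟩ := Finite.exists_infinite_fiber π
    refine ⟨x, fun i => ?_⟩
    have hinf : (π ⁻¹' {x}).Infinite := Set.infinite_coe_iff.mp hx
    obtain ⟨j, hj, hji⟩ := hinf.exists_gt i
    exact ⟨j, le_of_lt hji, hj⟩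
  · intro s hs
    ext x
    constructor
    · intro hx
      induction hx with
      | refl => exact hs
      | tail _ step ih => exact hfair _ ih _ step
    · intro hx
      obtain ⟨j, _, hj⟩ := hs 0
      obtain ⟨j', hjj', hj'⟩ := hx j
      have := path_reach_aux f π hpath j j' hjj'
      rw [hj, hj'] at this
      exact this
end

section
/- Fair-path characterization of the strong basin: let A be an attractor of an asynchronous Boolean network with n ≥ 1 nodes. A state x belongs to the strong basin basS(A) if and only if every fair infinite path starting at x eventually visits A (i.e., for every fair infinite path π with π 0 = x there exists k with π k ∈ A). -/
open scoped Classical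


namespace SBFP

variable {n : ℕ}

/-- any state has a step (when `n ≥ 1`). -/
noncomputable def anyStep (hn : 1 ≤ n) (f : Fin n → (Fin n → Bool) → Bool)
    (s : Fin n → Bool) : Fin n → Bool :=
  Function.update s ⟨0, hn⟩ (f ⟨0, hn⟩ s)

lemma anyStep_step (hn : 1 ≤ n) (f : Fin n → (Fin n → Bool) → Bool)
    (s : Fin n → Bool) : BNStep f s (anyStep hn f s) := ⟨⟨0, hn⟩, rfl⟩

/-- chains of length `m`. -/
def Chain (f : Fin n → (Fin n → Bool) → Bool) (m : ℕ) (a b : Fin n → Bool) : Prop :=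
  ∃ g : ℕ → Fin n → Bool, g 0 = a ∧ g m = b ∧ ∀ k < m, BNStep f (g k) (g (k + 1))

lemma reach_of_chain {f : Fin n → (Fin n → Bool) → Bool} :
    ∀ m (a b : Fin n → Bool), Chain f m a b → Relation.ReflTransGen (BNStep f) a b := by
  intro m
  induction m with
  | zero =>
    rintro a b ⟨g, h0, hm, _⟩
    rw [← h0, ← hm]
  | succ m ih =>
    rintro a b ⟨g, h0, hm, hs⟩
    have h1 : Relation.ReflTransGen (BNStep f) (g 1) b :=
      ih (g 1) b ⟨fun k => g (k + 1), rfl, hm, fun k hk => hs (k + 1) (by omega)⟩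
    exact Relation.ReflTransGen.head (h0 ▸ hs 0 (by omega)) h1

lemma chain_of_reach {f : Fin n → (Fin n → Bool) → Bool} {a b : Fin n → Bool}
    (h : Relation.ReflTransGen (BNStep f) a b) : ∃ m, Chain f m a b := by
  induction h with
  | refl => exact ⟨0, fun _ => a, rfl, rfl, fun k hk => absurd hk (by omega)⟩
  | @tail c d hcd hdc ih =>
    obtain ⟨m, g, h0, hm, hs⟩ := ih
    refine ⟨m + 1, fun k => if k ≤ m then g k else d, by simp [h0],
      by beta_reduce; rw [if_neg (by omega)], ?_⟩
    intro k hk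
    rcases Nat.lt_or_ge k m with hkm | hkm
    · simpa [Nat.le_of_lt hkm, Nat.succ_le_of_lt hkm] using hs k hkm
    · have hk' : k = m := by omega
      subst hk'
      beta_reduce
      rw [if_pos (le_refl k), if_neg (by omega), hm]
      exact hdc

noncomputable def dist (f : Fin n → (Fin n → Bool) → Bool) (a b : Fin n → Bool) : ℕ :=
  if h : ∃ m, Chain f m a b then Nat.find h else 0

lemma dist_chain {f : Fin n → (Fin n → Bool) → Bool} {a b : Fin n → Bool}
    (h : ∃ m, Chain f m a b) : Chain f (dist f a b) a b := by
  rw [dist, dif_pos h]; exact Nat.find_spec h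

lemma dist_le {f : Fin n → (Fin n → Bool) → Bool} {a b : Fin n → Bool} {m : ℕ}
    (h : Chain f m a b) : dist f a b ≤ m := by
  rw [dist, dif_pos ⟨m, h⟩]; exact Nat.find_min' _ h

/-- From a state reaching `b` but different from it, one can take a step that
strictly decreases the distance to `b`. -/
lemma exists_step_dist_lt {f : Fin n → (Fin n → Bool) → Bool} {a b : Fin n → Bool}
    (hne : a ≠ b) (hr : Relation.ReflTransGen (BNStep f) a b) :
    ∃ c, BNStep f a c ∧ Relation.ReflTransGen (BNStep f) c b ∧ dist f c b < dist f a b := by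
  have hex : ∃ m, Chain f m a b := chain_of_reach hr
  obtain ⟨g, h0, hm, hs⟩ := dist_chain hex
  have hm0 : dist f a b ≠ 0 := by
    intro h
    rw [h] at hm
    exact hne (by rw [← h0, hm])
  obtain ⟨m', hm'⟩ : ∃ m', dist f a b = m' + 1 := ⟨dist f a b - 1, by omega⟩
  rw [hm'] at hm hs
  have hch : Chain f m' (g 1) b := ⟨fun k => g (k + 1), rfl, hm, fun k hk => hs (k + 1) (by omega)⟩
  exact ⟨g 1, h0 ▸ hs 0 (by omega), reach_of_chain _ _ _ hch,
    lt_of_le_of_lt (dist_le hch) (by rw [hm']; omega)⟩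

noncomputable def nextS (hn : 1 ≤ n) (f : Fin n → (Fin n → Bool) → Bool)
    (a b : Fin n → Bool) : Fin n → Bool :=
  if h : Relation.ReflTransGen (BNStep f) a b ∧ a ≠ b then
    Classical.choose (exists_step_dist_lt h.2 h.1)
  else anyStep hn f a

lemma nextS_spec (hn : 1 ≤ n) {f : Fin n → (Fin n → Bool) → Bool} {a b : Fin n → Bool}
    (hr : Relation.ReflTransGen (BNStep f) a b) (hne : a ≠ b) :
    BNStep f a (nextS hn f a b) ∧ Relation.ReflTransGen (BNStep f) (nextS hn f a b) b ∧
      dist f (nextS hn f a b) b < dist f a b := by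
  rw [nextS, dif_pos ⟨hr, hne⟩]
  exact Classical.choose_spec (exists_step_dist_lt hne hr)

/-- the scheduler step. -/
noncomputable def Tstep (hn : 1 ≤ n) (f : Fin n → (Fin n → Bool) → Bool)
    (e : ℕ → Fin n → Bool) (q : (Fin n → Bool) × ℕ) : (Fin n → Bool) × ℕ :=
  if q.1 = e q.2 then (anyStep hn f q.1, q.2 + 1)
  else if Relation.ReflTransGen (BNStep f) q.1 (e q.2) then (nextS hn f q.1 (e q.2), q.2)
  else (anyStep hn f q.1, q.2 + 1)

lemma tstep_cases (hn : 1 ≤ n) (f : Fin n → (Fin n → Bool) → Bool)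
    (e : ℕ → Fin n → Bool) (q : (Fin n → Bool) × ℕ) :
    ((q.1 = e q.2 ∨ ¬ Relation.ReflTransGen (BNStep f) q.1 (e q.2)) ∧
      Tstep hn f e q = (anyStep hn f q.1, q.2 + 1)) ∨
    (q.1 ≠ e q.2 ∧ Relation.ReflTransGen (BNStep f) q.1 (e q.2) ∧
      Tstep hn f e q = (nextS hn f q.1 (e q.2), q.2)) := by
  rw [Tstep]
  by_cases h1 : q.1 = e q.2
  · exact Or.inl ⟨Or.inl h1, by rw [if_pos h1]⟩
  · by_cases h2 : Relation.ReflTransGen (BNStep f) q.1 (e q.2)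
    · exact Or.inr ⟨h1, h2, by rw [if_neg h1, if_pos h2]⟩
    · exact Or.inl ⟨Or.inr h2, by rw [if_neg h1, if_neg h2]⟩

lemma tstep_step (hn : 1 ≤ n) (f : Fin n → (Fin n → Bool) → Bool)
    (e : ℕ → Fin n → Bool) (q : (Fin n → Bool) × ℕ) :
    BNStep f q.1 (Tstep hn f e q).1 := by
  rcases tstep_cases hn f e q with ⟨_, h⟩ | ⟨h1, h2, h⟩
  · rw [h]; exact anyStep_step hn f q.1
  · rw [h]; exact (nextS_spec hn h2 h1).1

lemma tstep_snd (hn : 1 ≤ n) (f : Fin n → (Fin n → Bool) → Bool)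
    (e : ℕ → Fin n → Bool) (q : (Fin n → Bool) × ℕ) :
    (Tstep hn f e q).2 = q.2 ∨ (Tstep hn f e q).2 = q.2 + 1 := by
  rcases tstep_cases hn f e q with ⟨_, h⟩ | ⟨_, _, h⟩
  · exact Or.inr (by rw [h])
  · exact Or.inl (by rw [h])

/-- each pursuit phase terminates. -/
lemma phase_progress (hn : 1 ≤ n) (f : Fin n → (Fin n → Bool) → Bool)
    (e : ℕ → Fin n → Bool) :
    ∀ D (q : (Fin n → Bool) × ℕ), dist f q.1 (e q.2) ≤ D →
      ∃ j, ((Tstep hn f e)^[j] q).2 = q.2 + 1 := by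
  intro D
  induction D with
  | zero =>
    intro q hq
    rcases tstep_cases hn f e q with ⟨_, h⟩ | ⟨h1, h2, _⟩
    · exact ⟨1, by rw [Function.iterate_one, h]⟩
    · exfalso
      obtain ⟨g, h0, hm, _⟩ := dist_chain (chain_of_reach h2)
      have : dist f q.1 (e q.2) = 0 := by omega
      rw [this] at hm
      exact h1 (h0 ▸ hm ▸ rfl)
  | succ D ih =>
    intro q hq
    rcases tstep_cases hn f e q with ⟨_, h⟩ | ⟨h1, h2, h⟩
    · exact ⟨1, by rw [Function.iterate_one, h]⟩
    · have hlt := (nextS_spec hn h2 h1).2.2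
      have hd : dist f (Tstep hn f e q).1 (e (Tstep hn f e q).2) ≤ D := by
        rw [h]; simp only; omega
      obtain ⟨j, hj⟩ := ih (Tstep hn f e q) hd
      refine ⟨j + 1, ?_⟩
      rw [Function.iterate_succ_apply, hj, h]

section Path

variable (hn : 1 ≤ n) (f : Fin n → (Fin n → Bool) → Bool) (e : ℕ → Fin n → Bool)
  (q0 : (Fin n → Bool) × ℕ)

noncomputable def pathOf (m : ℕ) : (Fin n → Bool) × ℕ := (Tstep hn f e)^[m] q0

lemma pathOf_zero : pathOf hn f e q0 0 = q0 := rfl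

lemma pathOf_succ (m : ℕ) :
    pathOf hn f e q0 (m + 1) = Tstep hn f e (pathOf hn f e q0 m) :=
  Function.iterate_succ_apply' _ _ _

lemma pathOf_step (m : ℕ) :
    BNStep f (pathOf hn f e q0 m).1 (pathOf hn f e q0 (m + 1)).1 := by
  rw [pathOf_succ]; exact tstep_step hn f e _

lemma pathOf_snd_succ (m : ℕ) :
    (pathOf hn f e q0 (m + 1)).2 = (pathOf hn f e q0 m).2 ∨
    (pathOf hn f e q0 (m + 1)).2 = (pathOf hn f e q0 m).2 + 1 := by
  rw [pathOf_succ]; exact tstep_snd hn f e _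

lemma pathOf_snd_mono : Monotone fun m => (pathOf hn f e q0 m).2 := by
  apply monotone_nat_of_le_succ
  intro m
  rcases pathOf_snd_succ hn f e q0 m with h | h <;> omega

lemma pathOf_snd_le (m : ℕ) : (pathOf hn f e q0 m).2 ≤ q0.2 + m := by
  induction m with
  | zero => simp [pathOf_zero]
  | succ m ih => rcases pathOf_snd_succ hn f e q0 m with h | h <;> omega

lemma pathOf_reach {a b : ℕ} (hab : a ≤ b) :
    Relation.ReflTransGen (BNStep f) (pathOf hn f e q0 a).1 (pathOf hn f e q0 b).1 := by
  induction b, hab using Nat.le_induction with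
  | base => exact Relation.ReflTransGen.refl
  | succ b hab ih => exact ih.tail (pathOf_step hn f e q0 b)

lemma pathOf_transition (m : ℕ) :
    ∃ m' ≥ m, (pathOf hn f e q0 m').2 = (pathOf hn f e q0 m).2 ∧
      (pathOf hn f e q0 (m' + 1)).2 = (pathOf hn f e q0 m).2 + 1 := by
  have hprog : ∃ j, (pathOf hn f e q0 (j + m)).2 = (pathOf hn f e q0 m).2 + 1 := by
    obtain ⟨j, hj⟩ := phase_progress hn f e
      (dist f (pathOf hn f e q0 m).1 (e (pathOf hn f e q0 m).2)) (pathOf hn f e q0 m) le_rfl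
    refine ⟨j, ?_⟩
    rw [pathOf, Function.iterate_add_apply]
    exact hj
  have hP : ∃ j, (pathOf hn f e q0 (j + m)).2 > (pathOf hn f e q0 m).2 := by
    obtain ⟨j, hj⟩ := hprog; exact ⟨j, by omega⟩
  classical
  have hj0 : (pathOf hn f e q0 (Nat.find hP + m)).2 > (pathOf hn f e q0 m).2 :=
    Nat.find_spec hP
  generalize hj0def : Nat.find hP = j0 at hj0
  have hj01 : 1 ≤ j0 := by
    by_contra hcon
    have h0 : j0 = 0 := by omega
    rw [h0, Nat.zero_add] at hj0
    omega
  have hmin : ¬ (pathOf hn f e q0 ((j0 - 1) + m)).2 > (pathOf hn f e q0 m).2 := by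
    rw [← hj0def] at hj01 ⊢
    exact Nat.find_min hP (by omega)
  have hmono : (pathOf hn f e q0 m).2 ≤ (pathOf hn f e q0 ((j0 - 1) + m)).2 :=
    pathOf_snd_mono hn f e q0 (by omega)
  have heq : (pathOf hn f e q0 ((j0 - 1) + m)).2 = (pathOf hn f e q0 m).2 := by omega
  refine ⟨(j0 - 1) + m, by omega, heq, ?_⟩
  have h1 : (j0 - 1) + m + 1 = j0 + m := by omega
  rw [h1]
  rcases pathOf_snd_succ hn f e q0 ((j0 - 1) + m) with h | h
  · rw [h1] at h; omega
  · rw [h1] at h; omega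

lemma pathOf_attains (hq0 : q0.2 = 0) (k : ℕ) :
    ∃ m, (pathOf hn f e q0 m).2 = k := by
  induction k with
  | zero => exact ⟨0, hq0⟩
  | succ k ih =>
    obtain ⟨m, hm⟩ := ih
    obtain ⟨m', _, _, h2⟩ := pathOf_transition hn f e q0 m
    exact ⟨m' + 1, by omega⟩

lemma pathOf_F5 (m : ℕ) (h : (pathOf hn f e q0 (m + 1)).2 = (pathOf hn f e q0 m).2 + 1) :
    (pathOf hn f e q0 m).1 = e (pathOf hn f e q0 m).2 ∨
      ¬ Relation.ReflTransGen (BNStep f) (pathOf hn f e q0 m).1 (e (pathOf hn f e q0 m).2) := by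
  rcases tstep_cases hn f e (pathOf hn f e q0 m) with ⟨hc, _⟩ | ⟨_, _, heq⟩
  · exact hc
  · exfalso
    rw [pathOf_succ, heq] at h
    simp at h

lemma pathOf_phase0 (hq0 : q0.2 = 0)
    (hr : Relation.ReflTransGen (BNStep f) q0.1 (e 0)) :
    ∀ m, (pathOf hn f e q0 m).2 = 0 →
      Relation.ReflTransGen (BNStep f) (pathOf hn f e q0 m).1 (e 0) := by
  intro m
  induction m with
  | zero => intro _; rw [pathOf_zero]; exact hr
  | succ m ih =>
    intro hm1
    have hm0 : (pathOf hn f e q0 m).2 = 0 := by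
      have hle : (pathOf hn f e q0 m).2 ≤ (pathOf hn f e q0 (m + 1)).2 :=
        pathOf_snd_mono hn f e q0 (Nat.le_succ m)
      omega
    rcases tstep_cases hn f e (pathOf hn f e q0 m) with ⟨_, heq⟩ | ⟨h1, h2, heq⟩
    · exfalso
      rw [pathOf_succ, heq] at hm1
      simp [hm0] at hm1
    · rw [pathOf_succ, heq]
      show Relation.ReflTransGen (BNStep f)
        (nextS hn f (pathOf hn f e q0 m).1 (e (pathOf hn f e q0 m).2)) (e 0)
      rw [hm0]
      have := (nextS_spec hn h2 h1).2.1
      rwa [hm0] at this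

end Path

/-- an enumeration of a fintype starting at `b0` hitting every element at
arbitrarily large indices. -/
lemma exists_enum {α : Type*} [Fintype α] (b0 : α) :
    ∃ e : ℕ → α, e 0 = b0 ∧ ∀ (b : α) (i : ℕ), ∃ k ≥ i, e k = b := by
  classical
  have hN : 0 < Fintype.card α := Fintype.card_pos_iff.mpr ⟨b0⟩
  set N := Fintype.card α with hNdef
  let eqv : α ≃ Fin N := Fintype.equivFin α
  refine ⟨fun k => if k = 0 then b0 else eqv.symm ⟨(k - 1) % N, Nat.mod_lt _ hN⟩, rfl, ?_⟩
  intro b i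
  have hle : i ≤ N * i := Nat.le_mul_of_pos_left i hN
  refine ⟨1 + (eqv b).val + N * i, by omega, ?_⟩
  have hk0 : ¬ (1 + (eqv b).val + N * i = 0) := by omega
  beta_reduce
  rw [if_neg hk0]
  have hmod : (1 + (eqv b).val + N * i - 1) % N = (eqv b).val := by
    have h1 : 1 + (eqv b).val + N * i - 1 = (eqv b).val + N * i := by omega
    rw [h1, Nat.add_mul_mod_self_left, Nat.mod_eq_of_lt (eqv b).isLt]
  have h2 : (⟨(1 + (eqv b).val + N * i - 1) % N, Nat.mod_lt _ hN⟩ : Fin N) = eqv b := by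
    apply Fin.ext
    exact hmod
  rw [h2, Equiv.symm_apply_apply]

/-- Main construction: a fair path from `s` that enters the attractor `B`
(reachable from `s`), stays there, and visits every state of `B` infinitely
often. -/
lemma exists_fair_path (hn : 1 ≤ n) (f : Fin n → (Fin n → Bool) → Bool)
    {B : Set (Fin n → Bool)} (hB : IsAttractor f B) (s b0 : Fin n → Bool)
    (hr : b0 ∈ BNReach f s) (hb : b0 ∈ B) :
    ∃ π : ℕ → Fin n → Bool, π 0 = s ∧ IsPath f π ∧ Fair f π ∧
      (∀ b ∈ B, InfOften π b) ∧ ∃ m0 : ℕ, ∀ m ≥ m0, π m ∈ B := by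
  classical
  obtain ⟨e, he0, he⟩ := exists_enum b0
  set q0 : (Fin n → Bool) × ℕ := (s, 0) with hq0def
  set π : ℕ → Fin n → Bool := fun m => (pathOf hn f e q0 m).1 with hπdef
  have hq02 : q0.2 = 0 := rfl
  have hπ0 : π 0 = s := rfl
  have hpath : IsPath f π := fun k => pathOf_step hn f e q0 k
  -- entry into B
  obtain ⟨m0, hm0ge, hk0, hk1⟩ := pathOf_transition hn f e q0 0
  have hκ00 : (pathOf hn f e q0 0).2 = 0 := hq02
  have hentry : π m0 = b0 := by
    have hreach : Relation.ReflTransGen (BNStep f) (pathOf hn f e q0 m0).1 (e 0) := by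
      apply pathOf_phase0 hn f e q0 hq02
      · rw [he0]; exact hr
      · omega
    have hF5 := pathOf_F5 hn f e q0 m0 (by omega)
    rcases hF5 with h | h
    · rw [hπdef]
      simp only
      rw [h]
      have : (pathOf hn f e q0 m0).2 = 0 := by omega
      rw [this, he0]
    · exact absurd (by rw [show (pathOf hn f e q0 m0).2 = 0 by omega]; exact hreach) h
  -- the path stays in B after m0
  have hstay : ∀ m, m0 ≤ m → π m ∈ B := by
    intro m hm
    induction m, hm using Nat.le_induction with
    | base => rw [hentry]; exact hb
    | succ m hm ih =>
      have hstep : π (m + 1) ∈ BNReach f (π m) :=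
        Relation.ReflTransGen.single (pathOf_step hn f e q0 m)
      rwa [hB.2 (π m) ih] at hstep
  -- every state of B occurs infinitely often
  have hio : ∀ b ∈ B, InfOften π b := by
    intro b hbB i
    obtain ⟨k, hki, hkb⟩ := he b (max i m0)
    obtain ⟨m, hm⟩ := pathOf_attains hn f e q0 hq02 k
    obtain ⟨m', hm'ge, hm'k, hm'k1⟩ := pathOf_transition hn f e q0 m
    have hkm' : k ≤ m' := by
      have h1 := pathOf_snd_le hn f e q0 m'
      rw [hq02] at h1
      omega
    have hm'B : π m' ∈ B := hstay m' (by omega)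
    have hreach : Relation.ReflTransGen (BNStep f) (pathOf hn f e q0 m').1
        (e (pathOf hn f e q0 m').2) := by
      rw [show (pathOf hn f e q0 m').2 = k by omega, hkb]
      show b ∈ BNReach f (π m')
      rw [hB.2 (π m') hm'B]
      exact hbB
    have hF5 := pathOf_F5 hn f e q0 m' (by omega)
    rcases hF5 with h | h
    · refine ⟨m', by omega, ?_⟩
      rw [hπdef]
      simp only
      rw [h, show (pathOf hn f e q0 m').2 = k by omega, hkb]
    · exact absurd hreach h
  -- fairness
  have hfair : Fair f π := by
    intro x hx x' hstep i
    obtain ⟨j, hj, hjx⟩ := hx m0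
    have hxB : x ∈ B := hjx ▸ hstay j hj
    have hx'B : x' ∈ B := by
      have h1 : x' ∈ BNReach f x := Relation.ReflTransGen.single hstep
      rwa [hB.2 x hxB] at h1
    exact hio x' hx'B i
  exact ⟨π, hπ0, hpath, hfair, hio, m0, hstay⟩

/-- intersecting attractors are equal. -/
lemma attractor_eq_of_inter {f : Fin n → (Fin n → Bool) → Bool}
    {A A' : Set (Fin n → Bool)} (hA : IsAttractor f A) (hA' : IsAttractor f A')
    (h : (A ∩ A').Nonempty) : A = A' := by
  obtain ⟨a, ha, ha'⟩ := h
  rw [← hA.2 a ha, hA'.2 a ha']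

/-- every state can reach some attractor. -/
lemma exists_attractor_subset_reach (f : Fin n → (Fin n → Bool) → Bool)
    (s : Fin n → Bool) : ∃ B, IsAttractor f B ∧ B ⊆ BNReach f s := by
  have hfin : (BNReach f s).Finite := Set.toFinite _
  have hne : (BNReach f s).Nonempty := ⟨s, Relation.ReflTransGen.refl⟩
  obtain ⟨y, hy, hmin⟩ :=
    Set.exists_min_image (BNReach f s) (fun z => (BNReach f z).ncard) hfin hne
  refine ⟨BNReach f y, ⟨⟨y, Relation.ReflTransGen.refl⟩, ?_⟩,
    fun w hw => Relation.ReflTransGen.trans hy hw⟩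
  intro z hz
  have hsub : BNReach f z ⊆ BNReach f y := fun w hw => Relation.ReflTransGen.trans hz hw
  have hzs : z ∈ BNReach f s := Relation.ReflTransGen.trans hy hz
  exact Set.eq_of_subset_of_ncard_le hsub (hmin z hzs) (Set.toFinite _)

/-- pigeonhole: some state occurs infinitely often in any infinite path. -/
lemma exists_infOften (π : ℕ → Fin n → Bool) : ∃ y, InfOften π y := by
  obtain ⟨y, hy⟩ := Finite.exists_infinite_fiber π
  refine ⟨y, fun i => ?_⟩
  by_contra hcon
  push_neg at hcon
  have hsub : (π ⁻¹' {y}) ⊆ Set.Iio i := by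
    intro j hj
    simp only [Set.mem_preimage, Set.mem_singleton_iff] at hj
    simp only [Set.mem_Iio]
    by_contra hji
    exact hcon j (by omega) hj
  have hfin : (π ⁻¹' {y}).Finite := (Set.finite_Iio i).subset hsub
  exact hfin.not_infinite (Set.infinite_coe_iff.mp hy)

lemma isPath_reach {f : Fin n → (Fin n → Bool) → Bool} {π : ℕ → Fin n → Bool}
    (hπ : IsPath f π) {a b : ℕ} (h : a ≤ b) :
    Relation.ReflTransGen (BNStep f) (π a) (π b) := by
  induction b, h using Nat.le_induction with
  | base => exact Relation.ReflTransGen.refl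
  | succ b hab ih => exact ih.tail (hπ b)

end SBFP

/-- fair-path characterization of the strong basin: `x ∈ basS A`
iff every fair infinite path from `x` eventually visits `A`. -/
theorem strong_basin_fair_path_characterization {n : ℕ} (hn : 1 ≤ n)
    (f : Fin n → (Fin n → Bool) → Bool) (A : Set (Fin n → Bool))
    (hA : IsAttractor f A) (x : Fin n → Bool) :
    x ∈ basS f A ↔
      ∀ π : ℕ → Fin n → Bool, π 0 = x → IsPath f π → Fair f π →
        ∃ k : ℕ, π k ∈ A := by
  constructor
  · -- forward: strong basin implies every fair path visits A
    intro hx π hπ0 hπ hfair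
    obtain ⟨y, hy⟩ := SBFP.exists_infOften π
    set Sinf : Set (Fin n → Bool) := {z | InfOften π z} with hSdef
    have hclosed : ∀ z ∈ Sinf, BNReach f z = Sinf := by
      intro z hz
      apply Set.ext
      intro w
      constructor
      · intro hw
        induction hw with
        | refl => exact hz
        | tail h1 h2 ih => exact hfair _ ih _ h2
      · intro hw
        obtain ⟨j, _, hj⟩ := hz 0
        obtain ⟨j', hj'ge, hj'⟩ := hw j
        have hr := SBFP.isPath_reach hπ hj'ge
        rw [hj, hj'] at hr
        exact hr
    have hattr : IsAttractor f Sinf := ⟨⟨y, hy⟩, hclosed⟩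
    have hsub : Sinf ⊆ BNReach f x := by
      intro w hw
      obtain ⟨j, _, hj⟩ := hw 0
      have hr := SBFP.isPath_reach hπ (Nat.zero_le j)
      rw [hπ0, hj] at hr
      exact hr
    have hSA : Sinf = A := by
      by_contra hne
      have hempty := hx.2 Sinf hattr hne
      rw [Set.eq_empty_iff_forall_notMem] at hempty
      exact hempty y ⟨hsub hy, hy⟩
    obtain ⟨j, _, hj⟩ := hy 0
    refine ⟨j, ?_⟩
    rw [hj, ← hSA]
    exact hy
  · -- backward: fair-path property implies strong basin
    intro h
    refine ⟨?_, ?_⟩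
    · obtain ⟨B, hB, hBsub⟩ := SBFP.exists_attractor_subset_reach f x
      obtain ⟨b0, hb0⟩ := hB.1
      obtain ⟨π, h0, hp, hf, _, _⟩ :=
        SBFP.exists_fair_path hn f hB x b0 (hBsub hb0) hb0
      obtain ⟨k, hk⟩ := h π h0 hp hf
      refine ⟨π k, ?_, hk⟩
      have hr := SBFP.isPath_reach hp (Nat.zero_le k)
      rw [h0] at hr
      exact hr
    · intro A' hA' hne
      by_contra hcon
      obtain ⟨y, hyr, hyA'⟩ := Set.nonempty_iff_ne_empty.mpr hcon
      obtain ⟨π, h0, hp, hf, _, m0, hstay⟩ :=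
        SBFP.exists_fair_path hn f hA' x y hyr hyA'
      obtain ⟨k, hk⟩ := h π h0 hp hf
      have h1 : π (max k m0) ∈ A' := hstay _ (le_max_right k m0)
      have h2 : π (max k m0) ∈ A := by
        have hr := SBFP.isPath_reach hp (le_max_left k m0)
        rw [← hA.2 (π k) hk]
        exact hr
      exact hne (SBFP.attractor_eq_of_inter hA' hA ⟨_, h1, h2⟩)
end

section
/- Necessity of the weak basin for temporary target control: let A_t be an attractor of an asynchronous Boolean network with n ≥ 1 nodes, and let C be a temporary target control for A_t. Then every intermediate state lies in the weak basin of A_t, i.e., C(S) ⊆ basW(A_t). -/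
/-! ### Auxiliary construction: a canonical fair path -/

/-- One step of the "counter scheduler": from `(state, visit counts)`,
update the node `counts state % n` at the current state and bump its count. -/
def trajStep {n : ℕ} (hn : 1 ≤ n) (g : Fin n → (Fin n → Bool) → Bool)
    (p : (Fin n → Bool) × ((Fin n → Bool) → ℕ)) :
    (Fin n → Bool) × ((Fin n → Bool) → ℕ) :=
  (Function.update p.1 ⟨p.2 p.1 % n, Nat.mod_lt _ hn⟩
      (g ⟨p.2 p.1 % n, Nat.mod_lt _ hn⟩ p.1),
   Function.update p.2 p.1 (p.2 p.1 + 1))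

/-- The trajectory of the counter scheduler starting from `s0`. -/
def traj {n : ℕ} (hn : 1 ≤ n) (g : Fin n → (Fin n → Bool) → Bool)
    (s0 : Fin n → Bool) (k : ℕ) : (Fin n → Bool) × ((Fin n → Bool) → ℕ) :=
  (trajStep hn g)^[k] (s0, fun _ => 0)

lemma traj_succ {n : ℕ} (hn : 1 ≤ n) (g : Fin n → (Fin n → Bool) → Bool)
    (s0 : Fin n → Bool) (k : ℕ) :
    traj hn g s0 (k + 1) = trajStep hn g (traj hn g s0 k) :=
  Function.iterate_succ_apply' _ _ _

lemma traj_fst_succ {n : ℕ} (hn : 1 ≤ n) (g : Fin n → (Fin n → Bool) → Bool)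
    (s0 : Fin n → Bool) (k : ℕ) :
    (traj hn g s0 (k + 1)).1 =
      Function.update (traj hn g s0 k).1
        ⟨(traj hn g s0 k).2 (traj hn g s0 k).1 % n, Nat.mod_lt _ hn⟩
        (g ⟨(traj hn g s0 k).2 (traj hn g s0 k).1 % n, Nat.mod_lt _ hn⟩
          (traj hn g s0 k).1) := by
  rw [traj_succ]; rfl

lemma traj_snd_succ {n : ℕ} (hn : 1 ≤ n) (g : Fin n → (Fin n → Bool) → Bool)
    (s0 : Fin n → Bool) (k : ℕ) (x : Fin n → Bool) :
    (traj hn g s0 (k + 1)).2 x =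
      if x = (traj hn g s0 k).1 then (traj hn g s0 k).2 x + 1
      else (traj hn g s0 k).2 x := by
  rw [traj_succ]
  show Function.update _ _ _ x = _
  rw [Function.update_apply]
  split_ifs with h
  · subst h; rfl
  · rfl

/-- Counts are constant over stretches with no occurrence of `x`. -/
lemma cnt_const {n : ℕ} (hn : 1 ≤ n) (g : Fin n → (Fin n → Bool) → Bool)
    (s0 : Fin n → Bool) (x : Fin n → Bool) (a b : ℕ) (hab : a ≤ b)
    (h : ∀ m, a ≤ m → m < b → (traj hn g s0 m).1 ≠ x) :
    (traj hn g s0 b).2 x = (traj hn g s0 a).2 x := by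
  induction b, hab using Nat.le_induction with
  | base => rfl
  | succ b hab ih =>
    rw [traj_snd_succ, if_neg, ih]
    · intro m hm hmb; exact h m hm (by omega)
    · exact fun hx => h b hab (by omega) hx.symm

lemma next_occ {n : ℕ} (hn : 1 ≤ n) (g : Fin n → (Fin n → Bool) → Bool)
    (s0 : Fin n → Bool) (x : Fin n → Bool)
    (hx : InfOften (fun k => (traj hn g s0 k).1) x) (k : ℕ)
    (hk : (traj hn g s0 k).1 = x) :
    ∃ k' > k, (traj hn g s0 k').1 = x ∧
      (traj hn g s0 k').2 x = (traj hn g s0 k).2 x + 1 := by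
  obtain ⟨j, hj, hjx⟩ := hx (k + 1)
  have hP : ∃ m, k + 1 ≤ m ∧ (traj hn g s0 m).1 = x := ⟨j, hj, hjx⟩
  classical
  set k' := Nat.find hP with hk'def
  obtain ⟨hk'1, hk'2⟩ := Nat.find_spec hP
  refine ⟨k', by omega, hk'2, ?_⟩
  have h1 : (traj hn g s0 k').2 x = (traj hn g s0 (k + 1)).2 x := by
    apply cnt_const hn g s0 x (k + 1) k' hk'1
    intro m hm hmk' hmx
    exact Nat.find_min hP hmk' ⟨hm, hmx⟩
  rw [h1, traj_snd_succ, if_pos hk.symm]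

lemma occ_add {n : ℕ} (hn : 1 ≤ n) (g : Fin n → (Fin n → Bool) → Bool)
    (s0 : Fin n → Bool) (x : Fin n → Bool)
    (hx : InfOften (fun k => (traj hn g s0 k).1) x) (k : ℕ)
    (hk : (traj hn g s0 k).1 = x) (t : ℕ) :
    ∃ k' ≥ k, (traj hn g s0 k').1 = x ∧
      (traj hn g s0 k').2 x = (traj hn g s0 k).2 x + t := by
  induction t with
  | zero => exact ⟨k, le_rfl, hk, rfl⟩
  | succ t ih =>
    obtain ⟨k', hk'k, hk'x, hc⟩ := ih
    obtain ⟨k'', hk''k', hk''x, hc'⟩ := next_occ hn g s0 x hx k' hk'x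
    exact ⟨k'', by omega, hk''x, by omega⟩

/-- The trajectory is a path. -/
lemma traj_isPath {n : ℕ} (hn : 1 ≤ n) (g : Fin n → (Fin n → Bool) → Bool)
    (s0 : Fin n → Bool) : IsPath g (fun k => (traj hn g s0 k).1) := by
  intro k
  exact ⟨_, traj_fst_succ hn g s0 k⟩

/-- The trajectory is fair. -/
lemma traj_fair {n : ℕ} (hn : 1 ≤ n) (g : Fin n → (Fin n → Bool) → Bool)
    (s0 : Fin n → Bool) : Fair g (fun k => (traj hn g s0 k).1) := by
  intro x hx x' hstep N
  obtain ⟨i, hi⟩ := hstep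
  obtain ⟨k, hkN, hkx⟩ := hx N
  set c0 := (traj hn g s0 k).2 x with hc0
  set t := i.val + n - c0 % n with ht
  have hr : c0 % n < n := Nat.mod_lt _ hn
  have hmod : (c0 + t) % n = i.val := by
    have h2 : (c0 + t) % n = (c0 % n + t) % n :=
      Nat.ModEq.add_right t (Nat.mod_modEq c0 n).symm
    have h3 : c0 % n + t = i.val + n := by omega
    rw [h2, h3, Nat.add_mod_right, Nat.mod_eq_of_lt i.isLt]
  obtain ⟨k', hk'k, hk'x, hc'⟩ := occ_add hn g s0 x hx k hkx t
  refine ⟨k' + 1, by omega, ?_⟩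
  have hfin : (⟨(traj hn g s0 k').2 (traj hn g s0 k').1 % n,
      Nat.mod_lt _ hn⟩ : Fin n) = i := by
    apply Fin.ext
    show (traj hn g s0 k').2 (traj hn g s0 k').1 % n = i.val
    rw [hk'x, hc', hmod]
  show (traj hn g s0 (k' + 1)).1 = x'
  rw [traj_fst_succ, hfin, hk'x, hi]

/-- A single controlled step from a state in `restrC` stays in `restrC` and is
covered by the reflexive-transitive closure of the original dynamics. -/
lemma ctrl_step_reach {n : ℕ} (f : Fin n → (Fin n → Bool) → Bool)
    (O I : Finset (Fin n)) {s s' : Fin n → Bool} (hs : s ∈ restrC O I)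
    (h : BNStep (ctrlF f O I) s s') :
    s' ∈ restrC O I ∧ Relation.ReflTransGen (BNStep f) s s' := by
  obtain ⟨i, hi⟩ := h
  by_cases hO : i ∈ O
  · have hval : ctrlF f O I i s = s i := by
      rw [ctrlF]; simp [hO, hs.1 i hO]
    rw [hval, Function.update_eq_self] at hi
    subst hi
    exact ⟨hs, Relation.ReflTransGen.refl⟩
  · by_cases hI : i ∈ I
    · have hval : ctrlF f O I i s = s i := by
        rw [ctrlF]; simp [hO, hI, hs.2 i hI]
      rw [hval, Function.update_eq_self] at hi
      subst hi
      exact ⟨hs, Relation.ReflTransGen.refl⟩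
    · have hval : ctrlF f O I i s = f i s := by rw [ctrlF]; simp [hO, hI]
      rw [hval] at hi
      constructor
      · constructor
        · intro j hj
          rw [hi, Function.update_of_ne (by rintro rfl; exact hO hj)]
          exact hs.1 j hj
        · intro j hj
          rw [hi, Function.update_of_ne (by rintro rfl; exact hI hj)]
          exact hs.2 j hj
      · exact Relation.ReflTransGen.single ⟨i, hi⟩

/-- necessity of the weak basin for temporary target control:
if `C` is a temporary target control for the attractor `At`, then all
intermediate states lie in the weak basin of `At`. -/
theorem ttc_intermediate_in_weak_basin {n : ℕ} (hn : 1 ≤ n)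
    (f : Fin n → (Fin n → Bool) → Bool) (O I : Finset (Fin n))
    (hdisj : Disjoint O I) (At : Set (Fin n → Bool))
    (hAt : IsAttractor f At) (hC : IsTTC f O I At) :
    Set.range (applyC O I) ⊆ basW f At := by
  rintro x ⟨s, rfl⟩
  set g := ctrlF f O I with hg
  set π : ℕ → Fin n → Bool := fun k => (traj hn g (applyC O I s) k).1 with hπ
  have hπ0 : π 0 = applyC O I s := rfl
  obtain ⟨k, hk⟩ := hC s π hπ0 (traj_isPath hn g _) (traj_fair hn g _)
  -- `applyC O I s ∈ restrC O I`
  have hrestr0 : applyC O I s ∈ restrC O I := by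
    constructor
    · intro i hi; simp [applyC, hi]
    · intro i hi
      have hiO : i ∉ O := Finset.disjoint_right.mp hdisj hi
      simp [applyC, hiO, hi]
  -- every point of the path is reachable in the original dynamics
  have hreach : ∀ m : ℕ, π m ∈ restrC O I ∧
      Relation.ReflTransGen (BNStep f) (π 0) (π m) := by
    intro m
    induction m with
    | zero => exact ⟨hrestr0, Relation.ReflTransGen.refl⟩
    | succ m ih =>
      have hstep : BNStep g (π m) (π (m + 1)) := traj_isPath hn g _ m
      obtain ⟨h1, h2⟩ := ctrl_step_reach f O I ih.1 hstep
      exact ⟨h1, ih.2.trans h2⟩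
  obtain ⟨a, haR, haA⟩ := hk.1
  exact ⟨a, ((hreach k).2.trans haR), haA⟩
end

section
/- Characterization of temporary target control (Lemma 1): let A_t be an attractor of an asynchronous Boolean network with n ≥ 1 nodes and let C = (O, I) be a control. Then C is a temporary target control for A_t if and only if (1) basS(A_t) ∩ S|C ≠ ∅, and (2) C(S) is contained in the strong basin, in the controlled network G|C, of the remaining strong basin basS(A_t) ∩ S|C; here the strong basin in G|C of a set T ⊆ S is {x ∈ S | every fair infinite path of G|C starting at x eventually reaches a state in T}. -/
open Relation List

private lemma chainAppendAux {α : Type*} {R : α → α → Prop} {l₂ : List α} {b : α}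
    (h₂ : List.Chain R b l₂) :
    ∀ (l₁ : List α) (a : α), List.Chain R a l₁ →
      (a :: l₁).getLast? = some b → List.Chain R a (l₁ ++ l₂) := by
  intro l₁
  induction l₁ with
  | nil =>
      intro a _ hb
      simp only [List.getLast?_singleton, Option.some.injEq] at hb
      subst hb; simpa
  | cons x t ih =>
      intro a h₁ hb
      cases h₁ with
      | cons_cons hax h =>
          refine List.Chain.cons hax (ih x h ?_)
          rwa [List.getLast?_cons_cons] at hb

private theorem exists_fair_path {S : Type*} [Fintype S] [DecidableEq S] [Inhabited S]
    (R : S → S → Prop) (hser : ∀ x, ∃ y, R x y) (c : S) :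
    ∃ π : ℕ → S, π 0 = c ∧ (∀ k, R (π k) (π (k + 1))) ∧
      ∀ x : S, (∀ i : ℕ, ∃ j ≥ i, π j = x) →
        ∀ x' : S, R x x' → ∀ i : ℕ, ∃ j ≥ i, π j = x' := by
  classical
  set Rch : S → Set S := fun x => {y | Relation.ReflTransGen R x y} with hRch
  obtain ⟨y, hyc', hymin⟩ := Finset.exists_min_image (Rch c).toFinset
    (fun z => (Rch z).ncard) ⟨c, Set.mem_toFinset.2 Relation.ReflTransGen.refl⟩
  have hyc : Relation.ReflTransGen R c y := Set.mem_toFinset.1 hyc'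
  set A : Set S := Rch y with hA
  have hattr : ∀ z ∈ A, Rch z = A := by
    intro z hz
    have hsub : Rch z ⊆ A := fun w hw => Relation.ReflTransGen.trans hz hw
    have hzc : z ∈ (Rch c).toFinset := Set.mem_toFinset.2 (Relation.ReflTransGen.trans hyc hz)
    exact Set.eq_of_subset_of_ncard_le hsub (hymin z hzc) (Set.toFinite _)
  have hyA : y ∈ A := Relation.ReflTransGen.refl
  have hclosed : ∀ z ∈ A, ∀ z', R z z' → z' ∈ A := by
    intro z hz z' hzz'
    have h1 : z' ∈ Rch z := Relation.ReflTransGen.single hzz'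
    rwa [hattr z hz] at h1
  have hreachA : ∀ z ∈ A, ∀ a ∈ A, Relation.ReflTransGen R z a := by
    intro z hz a ha
    have : a ∈ Rch z := by rw [hattr z hz]; exact ha
    exact this
  -- enumeration of A
  set LA : List S := A.toFinset.toList with hLA
  have hmemLA : ∀ x, x ∈ LA ↔ x ∈ A := by
    intro x; rw [hLA, Finset.mem_toList, Set.mem_toFinset]
  have hm : 0 < LA.length := by
    rw [List.length_pos_iff]
    intro h
    have := (hmemLA y).2 hyA
    simp [h] at this
  set tgt : ℕ → S := fun k => LA.get ⟨k % LA.length, Nat.mod_lt _ hm⟩ with htgt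
  have htgtA : ∀ k, tgt k ∈ A := fun k => (hmemLA _).1 (List.get_mem _ _)
  -- positive chains
  have pos_chain : ∀ x ∈ A, ∀ a ∈ A, ∃ l : List S, l ≠ [] ∧ List.Chain R x l ∧
      l.getLast? = some a := by
    intro x hx a ha
    obtain ⟨x', hx'⟩ := hser x
    have hx'A : x' ∈ A := hclosed x hx x' hx'
    obtain ⟨l', hch, hlast⟩ :=
      List.exists_isChain_cons_of_relationReflTransGen (hreachA x' hx'A a ha)
    refine ⟨x' :: l', by simp, List.Chain.cons hx' hch, ?_⟩
    rw [List.getLast?_eq_getLast (by simp)]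
    exact congrArg some hlast
  have pos_chain' : ∀ a ∈ A, Relation.ReflTransGen R c a → ∃ l : List S, l ≠ [] ∧
      List.Chain R c l ∧ l.getLast? = some a := by
    intro a ha hca
    obtain ⟨l, hch, hlast⟩ := List.exists_isChain_cons_of_relationReflTransGen hca
    rcases eq_or_ne l [] with rfl | hne
    · simp only [List.getLast_singleton] at hlast
      subst hlast
      exact pos_chain _ ha _ ha
    · refine ⟨l, hne, hch, ?_⟩
      rw [List.getLast?_eq_getLast hne]
      rw [List.getLast_cons hne] at hlast
      exact congrArg some hlast
  -- anchors and segments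
  set anchor : ℕ → S := fun k => Nat.rec (motive := fun _ => S) c (fun j _ => tgt j) k
    with hanchor
  have hseg : ∀ k, ∃ l : List S, l ≠ [] ∧ List.Chain R (anchor k) l ∧
      l.getLast? = some (tgt k) := by
    intro k
    cases k with
    | zero =>
        exact pos_chain' (tgt 0) (htgtA 0)
          (Relation.ReflTransGen.trans hyc (hreachA y hyA _ (htgtA 0)))
    | succ j => exact pos_chain (tgt j) (htgtA j) (tgt (j + 1)) (htgtA (j + 1))
  choose seg hsegne hsegchain hseglast using hseg
  -- concatenation
  set J : ℕ → List S := fun k => Nat.rec (motive := fun _ => List S) []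
    (fun j l => l ++ seg j) k with hJ
  have hJsucc : ∀ k, J (k + 1) = J k ++ seg k := fun k => rfl
  have hJmain : ∀ k, List.Chain R c (J k) ∧ (c :: J k).getLast? = some (anchor k) := by
    intro k
    induction k with
    | zero => exact ⟨List.Chain.nil, rfl⟩
    | succ k ih =>
        obtain ⟨hch, hlast⟩ := ih
        constructor
        · exact chainAppendAux (hsegchain k) (J k) c hch hlast
        · have h1 : c :: J (k + 1) = (c :: J k) ++ seg k := by rw [hJsucc]; rfl
          rw [h1, List.getLast?_append_of_ne_nil _ (hsegne k)]
          exact hseglast k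
  have hJlen : ∀ k, k ≤ (J k).length := by
    intro k
    induction k with
    | zero => simp
    | succ k ih =>
        rw [hJsucc, List.length_append]
        have : 1 ≤ (seg k).length := List.length_pos_iff.2 (hsegne k)
        omega
  have hJpref : ∀ k k', k ≤ k' → J k <+: J k' := by
    intro k k' h
    induction k', h using Nat.le_induction with
    | base => exact List.prefix_refl _
    | succ k' _ ih => rw [hJsucc]; exact ih.trans (List.prefix_append _ _)
  -- the path
  set π : ℕ → S := fun t => (c :: J (t + 1)).getD t default with hπ
  have hlen' : ∀ t K, t + 1 ≤ K → t < (c :: J K).length := by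
    intro t K h
    have := hJlen K
    simp only [List.length_cons]
    omega
  have hπval : ∀ t K (h : t + 1 ≤ K), π t = (c :: J K).get ⟨t, hlen' t K h⟩ := by
    intro t K h
    have h1 : t < (c :: J (t + 1)).length := hlen' t (t + 1) le_rfl
    have hpref : c :: J (t + 1) <+: c :: J K :=
      List.cons_prefix_cons.2 ⟨rfl, hJpref _ _ h⟩
    rw [hπ]
    simp only [List.getD_eq_getElem _ _ h1, List.get_eq_getElem]
    exact hpref.getElem h1
  have hπ0 : π 0 = c := by rw [hπval 0 1 le_rfl]; rfl
  -- steps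
  have hstep : ∀ t, R (π t) (π (t + 1)) := by
    intro t
    have hch : List.Chain' R (c :: J (t + 2)) := (hJmain (t + 2)).1
    replace hch := List.isChain_iff_getElem.1 hch
    have hlt : t < (c :: J (t + 2)).length - 1 := by
      have := hJlen (t + 2); simp only [List.length_cons]; omega
    have := hch t (by omega)
    rw [hπval t (t + 2) (by omega), hπval (t + 1) (t + 2) le_rfl]
    exact this
  -- occurrence of targets
  have hocc : ∀ k, π ((J (k + 1)).length) = tgt k := by
    intro k
    rw [hπval ((J (k + 1)).length) ((J (k + 1)).length + 1) le_rfl]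
    have hpref : c :: J (k + 1) <+: c :: J ((J (k + 1)).length + 1) :=
      List.cons_prefix_cons.2 ⟨rfl, hJpref (k + 1) ((J (k + 1)).length + 1)
        (by have := hJlen (k + 1); omega)⟩
    have hidx : (J (k + 1)).length < (c :: J (k + 1)).length := by simp
    have hpe := hpref.getElem hidx
    simp only [List.get_eq_getElem]
    rw [← hpe]
    have hlast := (hJmain (k + 1)).2
    rw [List.getLast?_eq_getLast (by simp), List.getLast_eq_getElem] at hlast
    have := Option.some_injective _ hlast
    simpa using this
  -- tail in A
  have htail : ∀ t, (J 1).length ≤ t → π t ∈ A := by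
    intro t ht
    induction t with
    | zero =>
        have h1 := hJlen 1
        omega
    | succ t ih =>
        rcases Nat.lt_or_ge ((J 1).length) (t + 1) with h | h
        · exact hclosed _ (ih (by omega)) _ (hstep t)
        · have he : (J 1).length = t + 1 := by omega
          have h0 : π ((J 1).length) = tgt 0 := by simpa using hocc 0
          rw [← he, h0]
          exact htgtA 0
  -- infinitely-often occurrence of every element of A
  have hIO : ∀ a ∈ A, ∀ i : ℕ, ∃ j ≥ i, π j = a := by
    intro a ha i
    obtain ⟨r, hra⟩ := List.mem_iff_get.1 ((hmemLA a).2 ha)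
    set k := (r : ℕ) + LA.length * (i + 1) with hk
    have hkmod : k % LA.length = (r : ℕ) := by
      rw [hk, Nat.add_mul_mod_self_left, Nat.mod_eq_of_lt r.isLt]
    have hfin : (⟨k % LA.length, Nat.mod_lt _ hm⟩ : Fin LA.length) = r := Fin.ext hkmod
    have htgtk : tgt k = a := (congrArg LA.get hfin).trans hra
    refine ⟨(J (k + 1)).length, ?_, by rw [hocc k, htgtk]⟩
    have h1 : k + 1 ≤ (J (k + 1)).length := hJlen (k + 1)
    have h2 : i + 1 ≤ LA.length * (i + 1) := Nat.le_mul_of_pos_left _ hm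
    omega
  refine ⟨π, hπ0, hstep, ?_⟩
  intro x hx x' hxx' i
  have hxA : x ∈ A := by
    obtain ⟨j, hj, hje⟩ := hx ((J 1).length)
    rw [← hje]; exact htail j hj
  exact hIO x' (hclosed x hxA x' hxx') i


/-- Lemma 1: `C` is a temporary target control for `At` iff
`basS(At) ∩ S|C ≠ ∅` and `C(S)` is contained in the strong basin, in the
controlled network `G|C`, of the remaining strong basin `basS(At) ∩ S|C`. -/
theorem ttc_characterization {n : ℕ} (hn : 1 ≤ n)
    (f : Fin n → (Fin n → Bool) → Bool) (O I : Finset (Fin n))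
    (hdisj : Disjoint O I) (At : Set (Fin n → Bool))
    (hAt : IsAttractor f At) :
    IsTTC f O I At ↔
      (basS f At ∩ restrC O I).Nonempty ∧
      Set.range (applyC O I) ⊆
        {x : Fin n → Bool | ∀ π : ℕ → Fin n → Bool,
          π 0 = x → IsPath (ctrlF f O I) π → Fair (ctrlF f O I) π →
          ∃ k : ℕ, π k ∈ basS f At ∩ restrC O I} := by
  have hser : ∀ x : Fin n → Bool, ∃ y, BNStep (ctrlF f O I) x y := fun x =>
    ⟨Function.update x ⟨0, hn⟩ (ctrlF f O I ⟨0, hn⟩ x), ⟨0, hn⟩, rfl⟩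
  have happly : ∀ s, applyC O I s ∈ restrC O I := by
    intro s
    constructor
    · intro i hi; simp [applyC, hi]
    · intro i hi
      have hiO : i ∉ O := fun h => (Finset.disjoint_left.1 hdisj h) hi
      simp [applyC, hiO, hi]
  have hinv : ∀ s s' : Fin n → Bool, s ∈ restrC O I → BNStep (ctrlF f O I) s s' →
      s' ∈ restrC O I := by
    rintro s s' ⟨hO, hI⟩ ⟨i, rfl⟩
    constructor
    · intro j hj
      rcases eq_or_ne j i with rfl | hne
      · rw [Function.update_self]; simp [ctrlF, hj]
      · rw [Function.update_of_ne hne]; exact hO j hj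
    · intro j hj
      rcases eq_or_ne j i with rfl | hne
      · have hjO : j ∉ O := fun h => (Finset.disjoint_left.1 hdisj h) hj
        rw [Function.update_self]; simp [ctrlF, hjO, hj]
      · rw [Function.update_of_ne hne]; exact hI j hj
  have hπrestr : ∀ (π : ℕ → Fin n → Bool), π 0 ∈ restrC O I → IsPath (ctrlF f O I) π →
      ∀ k, π k ∈ restrC O I := by
    intro π h0 hp k
    induction k with
    | zero => exact h0
    | succ k ih => exact hinv _ _ ih (hp k)
  constructor
  · intro httc
    constructor
    · obtain ⟨π, hπ0, hpath, hfair⟩ := exists_fair_path (BNStep (ctrlF f O I)) hser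
        (applyC O I (fun _ => false))
      obtain ⟨k, hk⟩ := httc (fun _ => false) π hπ0 hpath hfair
      exact ⟨π k, hk, hπrestr π (by rw [hπ0]; exact happly _) hpath k⟩
    · rintro x ⟨s, rfl⟩ π h0 hp hf
      obtain ⟨k, hk⟩ := httc s π h0 hp hf
      exact ⟨k, hk, hπrestr π (by rw [h0]; exact happly _) hp k⟩
  · rintro ⟨hne, hsub⟩ s π h0 hp hf
    obtain ⟨k, hk, _⟩ := hsub ⟨s, rfl⟩ π h0 hp hf
    exact ⟨k, hk⟩
end

section
/- Sufficiency of the strong basin for instantaneous target control: let A_t be an attractor of an asynchronous Boolean network with n ≥ 1 nodes and let C be a control with C(S) ⊆ basS(A_t). Then applying C instantaneously drives the network to A_t from any source state: for every s ∈ S, every fair infinite path of the original network starting from C(s) eventually reaches a state in A_t, and from that point onward remains in A_t forever. -/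
lemma bn_reach_self {n : ℕ} (f : Fin n → (Fin n → Bool) → Bool)
    (s : Fin n → Bool) : s ∈ BNReach f s := Relation.ReflTransGen.refl

lemma bn_reach_trans {n : ℕ} {f : Fin n → (Fin n → Bool) → Bool}
    {s t u : Fin n → Bool} (h1 : t ∈ BNReach f s) (h2 : u ∈ BNReach f t) :
    u ∈ BNReach f s := Relation.ReflTransGen.trans h1 h2

lemma bn_reach_mono {n : ℕ} {f : Fin n → (Fin n → Bool) → Bool}
    {s t : Fin n → Bool} (h : t ∈ BNReach f s) :
    BNReach f t ⊆ BNReach f s := fun _ hu => bn_reach_trans h hu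

/-- Every state reaches some attractor. -/
lemma exists_attractor_reached {n : ℕ} (f : Fin n → (Fin n → Bool) → Bool)
    (s : Fin n → Bool) :
    ∃ A : Set (Fin n → Bool), IsAttractor f A ∧ (BNReach f s ∩ A).Nonempty := by
  suffices H : ∀ m : ℕ, ∀ s : Fin n → Bool, (BNReach f s).ncard ≤ m →
      ∃ A : Set (Fin n → Bool), IsAttractor f A ∧ (BNReach f s ∩ A).Nonempty by
    exact H (BNReach f s).ncard s le_rfl
  intro m
  induction m with
  | zero =>
    intro s hs
    exfalso
    have : (BNReach f s).ncard ≠ 0 := by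
      have : (BNReach f s).Nonempty := ⟨s, bn_reach_self f s⟩
      simpa [Set.ncard_eq_zero (Set.toFinite _)] using this.ne_empty
    omega
  | succ m ih =>
    intro s hs
    by_cases hatt : ∀ t ∈ BNReach f s, BNReach f t = BNReach f s
    · exact ⟨BNReach f s, ⟨⟨s, bn_reach_self f s⟩, hatt⟩,
        ⟨s, bn_reach_self f s, bn_reach_self f s⟩⟩
    · push_neg at hatt
      obtain ⟨t, ht, hne⟩ := hatt
      have hsub : BNReach f t ⊂ BNReach f s := ⟨bn_reach_mono ht, fun h => hne
        (le_antisymm (bn_reach_mono ht) h)⟩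
      have hlt : (BNReach f t).ncard < (BNReach f s).ncard :=
        Set.ncard_lt_ncard hsub (Set.toFinite _)
      obtain ⟨A, hA, ⟨a, ha1, ha2⟩⟩ := ih t (by omega)
      exact ⟨A, hA, a, bn_reach_trans ht ha1, ha2⟩

lemma basS_closed {n : ℕ} {f : Fin n → (Fin n → Bool) → Bool}
    {At : Set (Fin n → Bool)} {s s' : Fin n → Bool}
    (hs : s ∈ basS f At) (hstep : BNStep f s s') : s' ∈ basS f At := by
  have hss' : s' ∈ BNReach f s := Relation.ReflTransGen.single hstep
  have hsub := bn_reach_mono hss'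
  obtain ⟨A, hA, ⟨a, ha1, ha2⟩⟩ := exists_attractor_reached f s'
  constructor
  · by_cases hAeq : A = At
    · exact ⟨a, ha1, hAeq ▸ ha2⟩
    · exfalso
      have := hs.2 A hA hAeq
      have : a ∈ BNReach f s ∩ A := ⟨hsub ha1, ha2⟩
      rw [hs.2 A hA hAeq] at this
      exact this
  · intro A' hA' hne
    have := hs.2 A' hA' hne
    apply Set.eq_empty_of_subset_empty
    intro x hx
    rw [← this]
    exact ⟨hsub hx.1, hx.2⟩

lemma infOften_of_reach {n : ℕ} {f : Fin n → (Fin n → Bool) → Bool}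
    {π : ℕ → Fin n → Bool} (hfair : Fair f π) {x y : Fin n → Bool}
    (hx : InfOften π x) (hy : y ∈ BNReach f x) : InfOften π y := by
  induction hy with
  | refl => exact hx
  | tail _ hbc ih => exact hfair _ ih _ hbc

/-- sufficiency of the strong basin for instantaneous target
control: if `C(S) ⊆ basS(At)`, then every fair infinite path of the original
network starting from any `C(s)` eventually reaches `At` and stays in `At`
forever after. -/
theorem instantaneous_control_sufficiency {n : ℕ} (hn : 1 ≤ n)
    (f : Fin n → (Fin n → Bool) → Bool) (O I : Finset (Fin n))
    (hdisj : Disjoint O I) (At : Set (Fin n → Bool))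
    (hAt : IsAttractor f At)
    (hC : Set.range (applyC O I) ⊆ basS f At) :
    ∀ s : Fin n → Bool, ∀ π : ℕ → Fin n → Bool,
      π 0 = applyC O I s → IsPath f π → Fair f π →
      ∃ k : ℕ, π k ∈ At ∧ ∀ j ≥ k, π j ∈ At := by
  intro s π h0 hpath hfair
  -- every state on the path is in the strong basin
  have hbas : ∀ k, π k ∈ basS f At := by
    intro k
    induction k with
    | zero => rw [h0]; exact hC ⟨s, rfl⟩
    | succ k ih => exact basS_closed ih (hpath k)
  -- some state occurs infinitely often
  obtain ⟨x, hx⟩ := Finite.exists_infinite_fiber π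
  have hxio : InfOften π x := by
    intro i
    have hinf : (π ⁻¹' {x}).Infinite := Set.infinite_coe_iff.mp hx
    obtain ⟨j, hj1, hj2⟩ := hinf.exists_gt i
    exact ⟨j, le_of_lt hj2, hj1⟩
  -- x is in the strong basin
  obtain ⟨k0, _, hk0⟩ := hxio 0
  have hxbas : x ∈ basS f At := hk0 ▸ hbas k0
  obtain ⟨a, ha1, ha2⟩ := hxbas.1
  -- a ∈ At occurs infinitely often, so the path hits At
  have haio : InfOften π a := infOften_of_reach hfair hxio ha1
  obtain ⟨k, _, hk⟩ := haio 0
  refine ⟨k, hk ▸ ha2, ?_⟩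
  -- At is closed under steps
  have hclosed : ∀ b ∈ At, ∀ b', BNStep f b b' → b' ∈ At := by
    intro b hb b' hstep
    have : b' ∈ BNReach f b := Relation.ReflTransGen.single hstep
    rwa [hAt.2 b hb] at this
  intro j hj
  induction j, hj using Nat.le_induction with
  | base => exact hk ▸ ha2
  | succ j _ ihj => exact hclosed _ ihj _ (hpath j)
end
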